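/- Let G be a progressive graph and ≺ a linear order on E(G) satisfying conditions (U1) and (U2). Then ≺ satisfies condition (P̃2) if and only if ≺ satisfies condition (P3). -/

import Mathlib

variable {V E : Type}

/-- Edge reachability `e1 → e2`: a directed path of edges `f_0, …, f_k` with `k ≥ 1`,
`f_0 = e1`, `f_k = e2` and `t f_{i-1} = s f_i`. -/
def eReach (s t : E → V) : E → E → Prop :=
  Relation.TransGen (fun a b => t a = s b)

/-- Vertex reachability `v → w`: a directed path from `v` to `w` using at least one edge. -/
def vReach (s t : E → V) : V → V → Prop :=
  Relation.TransGen (fun v w => ∃ e, s e = v ∧ t e = w)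

/-- A directed graph is acyclic if no vertex reaches itself. -/
def Acyclic (s t : E → V) : Prop := ∀ v, ¬ vReach s t v v

/-- `I(v)`: incoming edges of `v`. -/
def inE (t : E → V) (v : V) : Set E := {e | t e = v}

/-- `O(v)`: outgoing edges of `v`. -/
def outE (s : E → V) (v : V) : Set E := {e | s e = v}

/-- Convex hull `X̄` of `X` in the linear order `le`: the interval `{y | X^- ≤ y ≤ X^+}`
(empty when `X` is empty). -/
def hull (le : E → E → Prop) (X : Set E) : Set E :=
  {y | ∃ a ∈ X, ∃ b ∈ X, le a y ∧ le y b}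

/-- The strict order associated to a linear order `le`. -/
def ltOf (le : E → E → Prop) (a b : E) : Prop := le a b ∧ a ≠ b

/-- A source: no incoming edges. -/
def IsSource (t : E → V) (v : V) : Prop := inE t v = ∅

/-- A sink: no outgoing edges. -/
def IsSink (s : E → V) (v : V) : Prop := outE s v = ∅

/-- A progressive graph: acyclic and every source and every sink has degree 1. -/
def Progressive (s t : E → V) : Prop :=
  Acyclic s t ∧
  ∀ v, (IsSource t v ∨ IsSink s v) → ({e | s e = v ∨ t e = v} : Set E).ncard = 1

/-- `I(G)`: input edges, those whose source vertex is a source of `G`. -/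
def inputE (s t : E → V) : Set E := {e | IsSource t (s e)}

/-- `O(G)`: output edges, those whose target vertex is a sink of `G`. -/
def outputE (s t : E → V) : Set E := {e | IsSink s (t e)}

/-- Condition (U1) = (P1): `e1 → e2` implies `e1 ≺ e2`. -/
def U1 (s t : E → V) (le : E → E → Prop) : Prop :=
  ∀ e1 e2, eReach s t e1 e2 → ltOf le e1 e2

/-- Condition (U2): for every vertex `v`, `Ī(v) ∩ Ō(v) = ∅` and `Ē(v) = Ī(v) ∪ Ō(v)`. -/
def U2 (s t : E → V) (le : E → E → Prop) : Prop :=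
  ∀ v, hull le (inE t v) ∩ hull le (outE s v) = ∅ ∧
    hull le (inE t v ∪ outE s v) = hull le (inE t v) ∪ hull le (outE s v)

/-- Condition (U3). -/
def U3 (s t : E → V) (le : E → E → Prop) : Prop :=
  ∀ v1 v2,
    ((inE t v1 ∩ hull le (inE t v2)).Nonempty →
      hull le (inE t v1) ⊆ hull le (inE t v2)) ∧
    ((outE s v1 ∩ hull le (outE s v2)).Nonempty →
      hull le (outE s v1) ⊆ hull le (outE s v2))

/-- Condition (U4): for every progressive vertex `v`, `I(G) ∩ Ō(v) = ∅` and `O(G) ∩ Ī(v) = ∅`. -/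
def U4 (s t : E → V) (le : E → E → Prop) : Prop :=
  ∀ v, ¬ IsSource t v → ¬ IsSink s v →
    inputE s t ∩ hull le (outE s v) = ∅ ∧ outputE s t ∩ hull le (inE t v) = ∅

/-- An upward planar order: a linear order on the edges satisfying (U1), (U2), (U3). -/
def IsUPO (s t : E → V) (le : E → E → Prop) : Prop :=
  IsLinearOrder E le ∧ U1 s t le ∧ U2 s t le ∧ U3 s t le

/-- Condition (P2). -/
def P2 (s t : E → V) (le : E → E → Prop) : Prop :=
  ∀ e1 e2 e3, ltOf le e1 e2 → ltOf le e2 e3 → eReach s t e1 e3 →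
    eReach s t e1 e2 ∨ eReach s t e2 e3

/-- Condition (P̃2). -/
def P2t (s t : E → V) (le : E → E → Prop) : Prop :=
  ∀ e1 e2 e3, ltOf le e1 e2 → ltOf le e2 e3 → t e1 = s e3 →
    eReach s t e1 e2 ∨ eReach s t e2 e3

/-- Condition (P3) (for distinct vertices). -/
def P3 (s t : E → V) (le : E → E → Prop) : Prop :=
  ∀ v1 v2, v1 ≠ v2 →
    ((inE t v1 ∩ hull le (inE t v2)).Nonempty → vReach s t v1 v2) ∧
    ((outE s v1 ∩ hull le (outE s v2)).Nonempty → vReach s t v2 v1)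

/-- Condition (A): for distinct `v1 v2`, `∅ ≠ Ī(v1) ⊆ Ī(v2)` implies `v1 → v2`,
and `∅ ≠ Ō(v1) ⊆ Ō(v2)` implies `v2 → v1`. -/
def CondA (s t : E → V) (le : E → E → Prop) : Prop :=
  ∀ v1 v2, v1 ≠ v2 →
    ((hull le (inE t v1)).Nonempty → hull le (inE t v1) ⊆ hull le (inE t v2) →
      vReach s t v1 v2) ∧
    ((hull le (outE s v1)).Nonempty → hull le (outE s v1) ⊆ hull le (outE s v2) →
      vReach s t v2 v1)

/-- A POP-graph: a progressive graph with a planar order ((P1) and (P2)). -/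
def IsPOP (s t : E → V) (le : E → E → Prop) : Prop :=
  Progressive s t ∧ IsLinearOrder E le ∧ U1 s t le ∧ P2 s t le

/-- `U(v) = {w | Ō(v) ⊊ Ō(w)}` when `O(v) ≠ ∅`, and `U(v) = ∅` otherwise. -/
def Uset (s : E → V) (le : E → E → Prop) (v : V) : Set V :=
  {w | (outE s v).Nonempty ∧ hull le (outE s v) ⊂ hull le (outE s w)}

/-- `D(v) = {w | Ī(v) ⊊ Ī(w)}` when `I(v) ≠ ∅`, and `D(v) = ∅` otherwise. -/
def Dset (t : E → V) (le : E → E → Prop) (v : V) : Set V :=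
  {w | (inE t v).Nonempty ∧ hull le (inE t v) ⊂ hull le (inE t w)}

/-- A CPP-extension of `G = (s, t)`: a POP-graph `(s', t', le')` with an embedding
`(φ0, φ1)` satisfying (E1)–(E4). -/
def IsCPP {V' E' : Type} (s t : E → V) (s' t' : E' → V')
    (le' : E' → E' → Prop) (φ0 : V → V') (φ1 : E → E') : Prop :=
  Function.Injective φ0 ∧ Function.Injective φ1 ∧
  (∀ e, s' (φ1 e) = φ0 (s e)) ∧ (∀ e, t' (φ1 e) = φ0 (t e)) ∧
  IsPOP s' t' le' ∧
  -- (E1)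
  Set.range φ0 = {v : V' | ¬ IsSource t' v ∧ ¬ IsSink s' v} ∧
  -- (E2)
  Nat.card E' = Nat.card E + ({v : V | IsSource t v}).ncard + ({v : V | IsSink s v}).ncard ∧
  -- (E3)
  (∀ v w, IsSource t v → IsSink s w → inE t' (φ0 v) ∩ outE s' (φ0 w) = ∅) ∧
  -- (E4)
  (∀ e' : E', e' ∉ Set.range φ1 → e' ∉ inputE s' t' → e' ∉ outputE s' t' →
    ((∃ a ∈ outE s' (s' e'), ltOf le' a e') ∧ (∃ b ∈ outE s' (s' e'), ltOf le' e' b)) ∨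
    ((∃ a ∈ inE t' (t' e'), ltOf le' a e') ∧ (∃ b ∈ inE t' (t' e'), ltOf le' e' b)))
section AuxP2tP3

variable {V E : Type} {s t : E → V} {le : E → E → Prop}

lemma eReach_to_vReach {e f : E} (h : eReach s t e f) :
    t e = s f ∨ vReach s t (t e) (s f) := by
  induction h using Relation.TransGen.head_induction_on with
  | single h => exact Or.inl h
  | head hr hrest ih =>
    rename_i e' c
    have h1 : vReach s t (t e') (t c) :=
      Relation.TransGen.single ⟨c, hr.symm, rfl⟩
    rcases ih with h2 | h2
    · exact Or.inr (h2 ▸ h1)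
    · exact Or.inr (h1.trans h2)

lemma vReach_to_eReach_aux {v w : V} (h : vReach s t v w) :
    ∀ e f : E, t e = v → s f = w → eReach s t e f := by
  induction h using Relation.TransGen.head_induction_on with
  | single h =>
    rintro e f rfl rfl
    obtain ⟨g, hg1, hg2⟩ := h
    exact Relation.TransGen.head hg1.symm (Relation.TransGen.single hg2)
  | head hr _ ih =>
    rintro e f rfl rfl
    obtain ⟨g, hg1, hg2⟩ := hr
    exact Relation.TransGen.head hg1.symm (ih g f hg2 rfl)

lemma vReach_to_eReach {e f : E} (h : vReach s t (t e) (s f)) :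
    eReach s t e f :=
  vReach_to_eReach_aux h e f rfl rfl

lemma in_lt_out (hU1 : U1 s t le) {v : V} {i o : E}
    (hi : i ∈ inE t v) (ho : o ∈ outE s v) : ltOf le i o :=
  hU1 i o (Relation.TransGen.single (hi.trans ho.symm))

lemma degree_one_contra (hprog : Progressive s t)
    {v : V} (hv : IsSource t v ∨ IsSink s v) {a b : E}
    (ha : s a = v ∨ t a = v) (hb : s b = v ∨ t b = v) (hab : a ≠ b) : False := by
  have h1 := hprog.2 v hv
  obtain ⟨x, hx⟩ := Set.ncard_eq_one.mp h1
  have hax : a ∈ ({e | s e = v ∨ t e = v} : Set E) := ha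
  have hbx : b ∈ ({e | s e = v ∨ t e = v} : Set E) := hb
  rw [hx] at hax hbx
  exact hab (hax.trans hbx.symm)

end AuxP2tP3

/-- for a progressive graph with (U1) and (U2), (P̃2) ↔ (P3). -/
theorem P2t_iff_P3 {V E : Type} [Fintype V] [Fintype E]
    (s t : E → V) (le : E → E → Prop) (hlin : IsLinearOrder E le)
    (hprog : Progressive s t) (hU1 : U1 s t le) (hU2 : U2 s t le) :
    P2t s t le ↔ P3 s t le := by
  haveI := hlin
  have htr : ∀ {a b c : E}, le a b → le b c → le a c :=
    fun {a b c} h1 h2 => IsTrans.trans a b c h1 h2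
  have hanti : ∀ {a b : E}, le a b → le b a → a = b :=
    fun {a b} h1 h2 => Std.Antisymm.antisymm a b h1 h2
  have hrefl : ∀ a : E, le a a := fun a => Std.Refl.refl a
  have hltt : ∀ {a b c : E}, ltOf le a b → ltOf le b c → ltOf le a c := by
    rintro a b c ⟨h1, h2⟩ ⟨h3, h4⟩
    refine ⟨htr h1 h3, ?_⟩
    rintro rfl
    exact h2 (hanti h1 h3)
  constructor
  · -- P̃2 → P3
    intro hP v1 v2 hne
    constructor
    · rintro ⟨e, he1, a, ha, b, hb, hae, heb⟩
      -- he1 : t e = v1, ha : t a = v2, hb : t b = v2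
      have he1' : t e = v1 := he1
      have ha' : t a = v2 := ha
      have hb' : t b = v2 := hb
      have hea : e ≠ a := fun h => hne (by rw [← he1', h, ha'])
      have heb' : e ≠ b := fun h => hne (by rw [← he1', h, hb'])
      -- v2 is not a sink
      by_cases hsk : IsSink s v2
      · exact (degree_one_contra hprog (Or.inr hsk) (Or.inr ha') (Or.inr hb')
          (fun h => hea (hanti (show le e a by rw [h]; exact heb) hae))).elim
      · obtain ⟨f, hf⟩ : (outE s v2).Nonempty := by
          rw [Set.nonempty_iff_ne_empty]; exact hsk
        -- a ≺ e ≺ f, t a = s f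
        have hbf : ltOf le b f := in_lt_out hU1 hb hf
        have hef : ltOf le e f := hltt ⟨heb, heb'⟩ hbf
        have := hP a e f ⟨hae, (Ne.symm hea)⟩ hef (ha.trans hf.symm)
        rcases this with hr | hr
        · -- a → e is impossible
          exfalso
          obtain ⟨c, hc1, hc2⟩ := Relation.TransGen.head'_iff.mp hr
          -- c ∈ outE s v2
          have hcO : c ∈ outE s v2 := by
            show s c = v2; rw [← hc1, ha]
          have hbc : ltOf le b c := in_lt_out hU1 hb hcO
          have hce : le c e := by
            rcases Relation.reflTransGen_iff_eq_or_transGen.mp hc2 with h | h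
            · exact h ▸ hrefl c
            · exact (hU1 c e h).1
          -- b ≺ c ≤ e ≤ b, e ≠ b
          exact heb' (hanti heb (htr hbc.1 hce))
        · -- e → f gives vReach v1 v2
          rcases eReach_to_vReach hr with h | h
          · exact (hne ((he1'.symm.trans h).trans hf)).elim
          · rw [he1', show s f = v2 from hf] at h; exact h
    · rintro ⟨e, he1, a, ha, b, hb, hae, heb⟩
      -- he1 : s e = v1, ha : s a = v2, hb : s b = v2
      have he1' : s e = v1 := he1
      have ha' : s a = v2 := ha
      have hb' : s b = v2 := hb
      have hea : e ≠ a := fun h => hne (by rw [← he1', h, ha'])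
      have heb' : e ≠ b := fun h => hne (by rw [← he1', h, hb'])
      by_cases hsc : IsSource t v2
      · exact (degree_one_contra hprog (Or.inl hsc) (Or.inl ha') (Or.inl hb')
          (fun h => hea (hanti (show le e a by rw [h]; exact heb) hae))).elim
      · obtain ⟨f, hf⟩ : (inE t v2).Nonempty := by
          rw [Set.nonempty_iff_ne_empty]; exact hsc
        have hfa : ltOf le f a := in_lt_out hU1 hf ha
        have hfe : ltOf le f e := hltt hfa ⟨hae, Ne.symm hea⟩
        have := hP f e b hfe ⟨heb, heb'⟩ (hf.trans hb.symm)
        rcases this with hr | hr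
        · rcases eReach_to_vReach hr with h | h
          · exact (hne (((he1'.symm.trans h.symm)).trans (show t f = v2 from hf))).elim
          · rw [show t f = v2 from hf, he1'] at h; exact h
        · exfalso
          obtain ⟨c, hc1, hc2⟩ := Relation.TransGen.tail'_iff.mp hr
          have hcI : c ∈ inE t v2 := by
            show t c = v2; rw [hc2, hb]
          have hca : ltOf le c a := in_lt_out hU1 hcI ha
          have hec : le e c := by
            rcases Relation.reflTransGen_iff_eq_or_transGen.mp hc1 with h | h
            · exact h ▸ hrefl e
            · exact (hU1 e c h).1
          exact hea (hanti (htr hec hca.1) hae)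
  · -- P3 → P̃2
    intro hP e1 e2 e3 h12 h23 h13
    have he1I : e1 ∈ inE t (t e1) := rfl
    have he3O : e3 ∈ outE s (t e1) := h13.symm
    have hmem : e2 ∈ hull le (inE t (t e1) ∪ outE s (t e1)) :=
      ⟨e1, Or.inl he1I, e3, Or.inr he3O, h12.1, h23.1⟩
    rw [(hU2 (t e1)).2] at hmem
    rcases hmem with hm | hm
    · -- e2 in hull of in-edges of t e1
      by_cases h : t e2 = t e1
      · exact Or.inr (Relation.TransGen.single (h.trans h13))
      · have hvr : vReach s t (t e2) (t e1) :=
          ((hP (t e2) (t e1) h).1) ⟨e2, rfl, hm⟩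
        exact Or.inr (vReach_to_eReach (h13 ▸ hvr))
    · by_cases h : s e2 = t e1
      · exact Or.inl (Relation.TransGen.single h.symm)
      · have hvr : vReach s t (t e1) (s e2) :=
          ((hP (s e2) (t e1) h).2) ⟨e2, rfl, hm⟩
        exact Or.inl (vReach_to_eReach hvr)
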